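/- arXiv:1912.02211 — 3 statements merged into one kernel-verified Lean document; each statement's English description precedes it below -/
import Mathlib

section
/- (Lovász Replication Lemma) If G' is obtained from a perfect graph G by replicating a single vertex, then G' is perfect. -/
open SimpleGraph

variable {V A B W : Type*}

/-- A proper coloring of `G` with natural-number colors. -/
def IsProperColoring (G : SimpleGraph V) (f : V → ℕ) : Prop :=
  ∀ u v, G.Adj u v → f u ≠ f v

/-- The number of distinct colors used by `f` on all vertices. -/
def colorsUsed [Fintype V] (f : V → ℕ) : ℕ := (Finset.univ.image f).card

/-- `n` is the clique number of `G`. -/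
def IsCliqueNum (G : SimpleGraph V) (n : ℕ) : Prop :=
  IsGreatest {k | ∃ s : Finset V, G.IsNClique k s} n

/-- `n` is the chromatic number of `G`. -/
def IsChromNum [Fintype V] (G : SimpleGraph V) (n : ℕ) : Prop :=
  IsLeast {k | ∃ f : V → ℕ, IsProperColoring G f ∧ colorsUsed f = k} n

/-- A graph is nice if its chromatic number equals its clique number. -/
def Nice [Fintype V] (G : SimpleGraph V) : Prop :=
  ∀ n, IsCliqueNum G n → IsChromNum G n

/-- A graph is perfect if every induced subgraph is nice. -/
def IsPerfect [Fintype V] (G : SimpleGraph V) : Prop :=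
  ∀ s : Finset V, Nice (G.induce (s : Set V))

/-- A stable (independent) set of vertices. -/
def IsStableSet (G : SimpleGraph V) (I : Set V) : Prop :=
  ∀ x ∈ I, ∀ y ∈ I, ¬ G.Adj x y

/-- `n` is the independence number of `G`. -/
def IsIndepNum (G : SimpleGraph V) (n : ℕ) : Prop :=
  IsGreatest {k | ∃ I : Finset V, IsStableSet G (I : Set V) ∧ I.card = k} n

/-- A stable cover: a collection of stable sets covering all vertices. -/
def IsStableCover (G : SimpleGraph V) (C : Finset (Finset V)) : Prop :=
  (∀ I ∈ C, IsStableSet G (I : Set V)) ∧ ∀ v : V, ∃ I ∈ C, v ∈ I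

/-- A clique cover: a collection of cliques covering all vertices. -/
def IsCliqueCover (G : SimpleGraph V) (C : Finset (Finset V)) : Prop :=
  (∀ K ∈ C, G.IsClique (K : Set V)) ∧ ∀ v : V, ∃ K ∈ C, v ∈ K

/-- `G` and `G'` are isomorphic via the mutually inverse maps `f` and `g`. -/
def IsoUsing (G : SimpleGraph A) (G' : SimpleGraph B) (f : A → B) (g : B → A) : Prop :=
  Function.Surjective f ∧ Function.Surjective g ∧ (∀ x, g (f x) = x) ∧
  (∀ x y, G.Adj x y ↔ G'.Adj (f x) (f y)) ∧ (∀ x y, G'.Adj x y ↔ G.Adj (g x) (g y))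

/-- The graph obtained from `G` by replicating the vertex `a`:
the new vertex `none` is adjacent to `a` and to all neighbours of `a`. -/
def replicate (G : SimpleGraph V) (a : V) : SimpleGraph (Option V) :=
  SimpleGraph.fromRel (fun x y => match x, y with
    | some x, some y => G.Adj x y
    | some x, none => x = a ∨ G.Adj x a
    | none, _ => False)

/-- `G'` is an expansion of `G`, witnessed by the backward map `g`. -/
def IsExpansionOf (G : SimpleGraph A) (G' : SimpleGraph B) (g : B → A) : Prop :=
  Function.Surjective g ∧
  (∀ x y : B, x ≠ y → g x = g y → G'.Adj x y) ∧
  (∀ x y : B, g x ≠ g y → (G'.Adj x y ↔ G.Adj (g x) (g y)))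

lemma replicate_adj_some_some {G : SimpleGraph V} {a u v : V} :
    (replicate G a).Adj (some u) (some v) ↔ G.Adj u v := by
  simp only [replicate, fromRel_adj]
  constructor
  · rintro ⟨-, h | h⟩
    · exact h
    · exact h.symm
  · intro h
    exact ⟨by simpa using h.ne, Or.inl h⟩

lemma replicate_adj_some_none {G : SimpleGraph V} {a u : V} :
    (replicate G a).Adj (some u) none ↔ (u = a ∨ G.Adj u a) := by
  simp only [replicate, fromRel_adj]
  constructor
  · rintro ⟨-, h | h⟩
    · exact h
    · exact h.elim
  · intro h
    exact ⟨by simp, Or.inl h⟩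

lemma replicate_adj_none_some {G : SimpleGraph V} {a u : V} :
    (replicate G a).Adj none (some u) ↔ (u = a ∨ G.Adj u a) := by
  rw [SimpleGraph.adj_comm]; exact replicate_adj_some_none

lemma coloring_le {V : Type*} [Fintype V] {Γ : SimpleGraph V} {f : V → ℕ}
    (hf : IsProperColoring Γ f) {k : ℕ} {s : Finset V} (hs : Γ.IsNClique k s) :
    k ≤ colorsUsed f := by
  classical
  have hinj : Set.InjOn f ↑s := by
    intro x hx y hy hxy
    by_contra hne
    exact hf x y (hs.isClique hx hy hne) hxy
  calc k = s.card := hs.card_eq.symm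
    _ = (s.image f).card := (Finset.card_image_of_injOn hinj).symm
    _ ≤ (Finset.univ.image f).card := Finset.card_le_card (by
        intro c hc; simp only [Finset.mem_image] at hc ⊢
        obtain ⟨x, -, hx⟩ := hc; exact ⟨x, Finset.mem_univ _, hx⟩)

lemma chrom_of_le {V : Type*} [Fintype V] {Γ : SimpleGraph V} {n : ℕ}
    (hc : IsCliqueNum Γ n) {f : V → ℕ} (hf : IsProperColoring Γ f)
    (hle : colorsUsed f ≤ n) : IsChromNum Γ n := by
  obtain ⟨s, hs⟩ := hc.1
  constructor
  · exact ⟨f, hf, le_antisymm hle (coloring_le hf hs)⟩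
  · rintro k ⟨g, hg, rfl⟩
    exact coloring_le hg hs

lemma cliqueNum_exists {V : Type*} [Fintype V] (Γ : SimpleGraph V) :
    ∃ n, IsCliqueNum Γ n := by
  classical
  set C : Finset (Finset V) := Finset.univ.filter (fun s => Γ.IsClique (s : Set V)) with hC
  have hne : C.Nonempty := ⟨∅, by simp [hC, Set.Pairwise]⟩
  refine ⟨C.sup Finset.card, ?_, ?_⟩
  · obtain ⟨s, hs, hsup⟩ := Finset.exists_mem_eq_sup C hne Finset.card
    refine ⟨s, ?_, hsup.symm⟩
    simpa [hC] using hs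
  · rintro k ⟨s, hs⟩
    rw [← hs.card_eq]
    exact Finset.le_sup (by simp [hC, hs.isClique])

section Transfer
variable {A B : Type*} {G : SimpleGraph A} {G' : SimpleGraph B}

lemma nclique_equiv (e : A ≃ B) (h : ∀ x y, G.Adj x y ↔ G'.Adj (e x) (e y))
    {k : ℕ} {s : Finset A} (hs : G.IsNClique k s) [DecidableEq B] :
    G'.IsNClique k (s.image e) := by
  constructor
  · rintro x hx y hy hne
    simp only [Finset.coe_image, Set.mem_image, Finset.mem_coe] at hx hy
    obtain ⟨u, hu, rfl⟩ := hx
    obtain ⟨v, hv, rfl⟩ := hy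
    exact (h u v).1 (hs.isClique hu hv (fun hc => hne (by rw [hc])))
  · rw [Finset.card_image_of_injective _ e.injective, hs.card_eq]

lemma nice_equiv [Fintype A] [Fintype B] (e : A ≃ B)
    (h : ∀ x y, G.Adj x y ↔ G'.Adj (e x) (e y)) (hG : Nice G) : Nice G' := by
  classical
  have h' : ∀ x y, G'.Adj x y ↔ G.Adj (e.symm x) (e.symm y) := by
    intro x y; rw [h]; simp
  intro n hn
  have hcn : IsCliqueNum G n := by
    constructor
    · obtain ⟨s, hs⟩ := hn.1
      exact ⟨s.image e.symm, nclique_equiv e.symm h' hs⟩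
    · rintro k ⟨s, hs⟩
      exact hn.2 ⟨s.image e, nclique_equiv e h hs⟩
  obtain ⟨⟨f, hf, hcard⟩, hlb⟩ := hG n hcn
  refine chrom_of_le hn (f := f ∘ e.symm) ?_ ?_
  · intro x y hxy
    exact hf _ _ ((h' x y).1 hxy)
  · have : Finset.univ.image (f ∘ e.symm) = Finset.univ.image f := by
      rw [← Finset.image_image]
      congr 1
      exact Finset.image_univ_equiv e.symm
    rw [colorsUsed, this]
    exact le_of_eq hcard

lemma nice_of_indSub [Fintype A] [Fintype B] (hG : IsPerfect G) (f : B ↪ A)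
    (hf : ∀ x y, G'.Adj x y ↔ G.Adj (f x) (f y)) : Nice G' := by
  classical
  set s : Finset A := Finset.univ.image f with hs
  have hmem : ∀ b : B, f b ∈ (s : Set A) := by
    intro b; simp [hs]
  set e : B → {x // x ∈ (s : Set A)} := fun b => ⟨f b, hmem b⟩ with he
  have hbij : Function.Bijective e := by
    constructor
    · intro x y hxy
      exact f.injective (congrArg Subtype.val hxy)
    · rintro ⟨x, hx⟩
      simp only [hs, Finset.coe_image, Set.mem_image, Finset.coe_univ, Set.mem_univ,
        Finset.mem_coe, Finset.mem_image, Finset.mem_univ, true_and] at hx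
      obtain ⟨b, hb⟩ := hx
      exact ⟨b, by simp [he, hb]⟩
  refine nice_equiv (G := G.induce (s : Set A)) (Equiv.ofBijective e hbij).symm ?_ (hG s)
  intro x y
  rw [hf]
  have hx : (e ((Equiv.ofBijective e hbij).symm x)).1 = f ((Equiv.ofBijective e hbij).symm x) := rfl
  show G.Adj _ _ ↔ G.Adj ((e ((Equiv.ofBijective e hbij).symm x)) : A) ((e ((Equiv.ofBijective e hbij).symm y)) : A)
  rw [Equiv.ofBijective_apply_symm_apply e hbij x, Equiv.ofBijective_apply_symm_apply e hbij y]
  exact Iff.rfl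

lemma perfect_of_indSub [Fintype A] [Fintype B] (hG : IsPerfect G) (f : B ↪ A)
    (hf : ∀ x y, G'.Adj x y ↔ G.Adj (f x) (f y)) : IsPerfect G' := by
  intro t
  refine nice_of_indSub hG ((Function.Embedding.subtype _).trans f) ?_
  intro x y
  exact hf x.1 y.1

end Transfer

section Core
variable {W : Type*} [Fintype W]

omit [Fintype W] in
lemma preimage_facts {H : SimpleGraph W} {b : W} {S : Finset (Option W)}
    (hS : (replicate H b).IsClique (S : Set (Option W))) :
    ∃ P : Finset W, H.IsClique (P : Set W) ∧ (∀ v, v ∈ P ↔ some v ∈ S) ∧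
      (none ∈ S → S.card = P.card + 1) ∧ (none ∉ S → S.card = P.card) := by
  classical
  set P : Finset W := S.preimage some (Option.some_injective W).injOn with hP
  have hmem : ∀ v, v ∈ P ↔ some v ∈ S := fun v => Finset.mem_preimage
  have hPc : H.IsClique (P : Set W) := by
    intro x hx y hy hne
    have := hS (by simpa using (hmem x).1 hx) (by simpa using (hmem y).1 hy)
      (fun h => hne (Option.some_injective W h))
    exact replicate_adj_some_some.1 this
  have himg : ∀ (h : none ∈ S ∨ none ∉ S), True := fun _ => trivial
  refine ⟨P, hPc, hmem, ?_, ?_⟩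
  · intro hns
    have : S = insert none (P.image some) := by
      ext x
      cases x with
      | none => simp [hns]
      | some v => simp [hmem]
    rw [this, Finset.card_insert_of_notMem (by simp),
      Finset.card_image_of_injective _ (Option.some_injective W)]
  · intro hns
    have : S = P.image some := by
      ext x
      cases x with
      | none => simp [hns]
      | some v => simp [hmem]
    rw [this, Finset.card_image_of_injective _ (Option.some_injective W)]

lemma nice_replicate {H : SimpleGraph W} {b : W} (hH : IsPerfect H) :
    Nice (replicate H b) := by
  classical
  have hNiceH : Nice H := nice_of_indSub hH (Function.Embedding.refl W) (fun _ _ => Iff.rfl)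
  intro n hn
  obtain ⟨ω, hω⟩ := cliqueNum_exists H
  have lift : ∀ {k : ℕ} {K : Finset W}, H.IsNClique k K →
      (replicate H b).IsNClique k (K.image some) := by
    intro k K hK
    constructor
    · rintro x hx y hy hne
      simp only [Finset.coe_image, Set.mem_image, Finset.mem_coe] at hx hy
      obtain ⟨u, hu, rfl⟩ := hx; obtain ⟨v, hv, rfl⟩ := hy
      exact replicate_adj_some_some.2 (hK.isClique hu hv (fun h => hne (by rw [h])))
    · rw [Finset.card_image_of_injective _ (Option.some_injective W), hK.card_eq]
  have hωn : ω ≤ n := by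
    obtain ⟨K, hK⟩ := hω.1
    exact hn.2 ⟨K.image some, lift hK⟩
  by_cases hcase : ∃ K : Finset W, H.IsNClique ω K ∧ b ∈ K
  · -- b lies in a maximum clique of H : n = ω + 1
    obtain ⟨K, hK, hbK⟩ := hcase
    have hup : (replicate H b).IsNClique (ω + 1) (insert none (K.image some)) := by
      constructor
      · intro x hx y hy hne
        simp only [Finset.coe_insert, Set.mem_insert_iff, Finset.coe_image,
          Set.mem_image, Finset.mem_coe] at hx hy
        rcases hx with rfl | ⟨u, hu, rfl⟩
        · rcases hy with rfl | ⟨v, hv, rfl⟩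
          · exact absurd rfl hne
          · refine replicate_adj_none_some.2 ?_
            by_cases hvb : v = b
            · exact Or.inl hvb
            · exact Or.inr (hK.isClique hv hbK hvb)
        · rcases hy with rfl | ⟨v, hv, rfl⟩
          · refine replicate_adj_some_none.2 ?_
            by_cases hub : u = b
            · exact Or.inl hub
            · exact Or.inr (hK.isClique hu hbK hub)
          · exact replicate_adj_some_some.2
              (hK.isClique hu hv (fun h => hne (by rw [h])))
      · rw [Finset.card_insert_of_notMem (by simp),
          Finset.card_image_of_injective _ (Option.some_injective W), hK.card_eq]
    have hge : ω + 1 ≤ n := hn.2 ⟨_, hup⟩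
    have hle : n ≤ ω + 1 := by
      obtain ⟨S, hS⟩ := hn.1
      obtain ⟨P, hPc, hmem, hc1, hc0⟩ := preimage_facts hS.isClique
      have hPω : P.card ≤ ω := hω.2 ⟨P, hPc, rfl⟩
      by_cases hns : none ∈ S
      · rw [← hS.card_eq, hc1 hns]; omega
      · rw [← hS.card_eq, hc0 hns]; omega
    have hnω : n = ω + 1 := le_antisymm hle hge
    obtain ⟨⟨f, hf, hfc⟩, -⟩ := hNiceH ω hω
    set M : ℕ := (Finset.univ.image f).sup id + 1 with hM
    have hfM : ∀ v, f v < M := by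
      intro v
      have : f v ≤ (Finset.univ.image f).sup id :=
        Finset.le_sup (f := id) (Finset.mem_image_of_mem f (Finset.mem_univ v))
      omega
    refine chrom_of_le hn (f := fun x => x.elim M f) ?_ ?_
    · intro u v huv
      cases u with
      | none =>
        cases v with
        | none => exact absurd rfl huv.ne
        | some v => exact fun h => absurd h.symm (hfM v).ne
      | some u =>
        cases v with
        | none => exact fun h => absurd h (hfM u).ne
        | some v => exact hf u v (replicate_adj_some_some.1 huv)
    · have hsub : Finset.univ.image (fun x : Option W => x.elim M f) ⊆
          insert M (Finset.univ.image f) := by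
        intro c hc
        simp only [Finset.mem_image, Finset.mem_univ, true_and] at hc
        obtain ⟨x, rfl⟩ := hc
        cases x with
        | none => exact Finset.mem_insert_self _ _
        | some v => exact Finset.mem_insert_of_mem (Finset.mem_image_of_mem f (Finset.mem_univ v))
      calc colorsUsed (fun x : Option W => x.elim M f)
          ≤ (insert M (Finset.univ.image f)).card := Finset.card_le_card hsub
        _ ≤ (Finset.univ.image f).card + 1 := Finset.card_insert_le _ _
        _ = ω + 1 := by unfold colorsUsed at hfc; omega
        _ = n := hnω.symm
  · -- b lies in no maximum clique : n = ω
    have hle : n ≤ ω := by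
      obtain ⟨S, hS⟩ := hn.1
      obtain ⟨P, hPc, hmem, hc1, hc0⟩ := preimage_facts hS.isClique
      by_cases hns : none ∈ S
      · set Q : Finset W := insert b P with hQ
        have hQc : H.IsClique (Q : Set W) := by
          intro x hx y hy hne
          simp only [hQ, Finset.coe_insert, Set.mem_insert_iff, Finset.mem_coe] at hx hy
          have adjb : ∀ v ∈ P, v ≠ b → H.Adj v b := by
            intro v hv hvb
            have := hS.isClique (by simpa using (hmem v).1 hv) (by simpa using hns)
              (by simp)
            rcases replicate_adj_some_none.1 this with h | h
            · exact absurd h hvb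
            · exact h
          rcases hx with rfl | hx
          · rcases hy with rfl | hy
            · exact absurd rfl hne
            · exact (adjb y hy (fun h => hne h.symm)).symm
          · rcases hy with rfl | hy
            · exact adjb x hx hne
            · exact hPc hx hy hne
        have hQω : Q.card ≤ ω := hω.2 ⟨Q, hQc, rfl⟩
        have hQlt : Q.card < ω := by
          rcases lt_or_eq_of_le hQω with h | h
          · exact h
          · exact absurd ⟨Q, ⟨hQc, h⟩, Finset.mem_insert_self _ _⟩ hcase
        have hPQ : P.card ≤ Q.card := Finset.card_le_card (Finset.subset_insert _ _)
        rw [← hS.card_eq, hc1 hns]; omega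
      · have hPω : P.card ≤ ω := hω.2 ⟨P, hPc, rfl⟩
        rw [← hS.card_eq, hc0 hns]; omega
    have hnω : n = ω := le_antisymm hle hωn
    subst hnω
    obtain ⟨⟨f, hf, hfc⟩, -⟩ := hNiceH n hω
    set T : Finset W := Finset.univ.filter (fun v => v = b ∨ f v ≠ f b) with hT
    have hbT : b ∈ T := by simp [hT]
    have hTmem : ∀ v, v ∈ T ↔ (v = b ∨ f v ≠ f b) := by
      intro v; simp [hT]
    obtain ⟨ω', hω'⟩ := cliqueNum_exists (H.induce (T : Set W))
    obtain ⟨⟨f', hf', hfc'⟩, -⟩ := hH T ω' hω'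
    have hω'lt : ω' < n := by
      obtain ⟨K', hK'⟩ := hω'.1
      set K : Finset W := K'.image Subtype.val with hKdef
      have hKc : H.IsNClique ω' K := by
        constructor
        · intro x hx y hy hne
          simp only [hKdef, Finset.coe_image, Set.mem_image, Finset.mem_coe] at hx hy
          obtain ⟨u, hu, rfl⟩ := hx; obtain ⟨v, hv, rfl⟩ := hy
          exact hK'.isClique hu hv (fun h => hne (by rw [h]))
        · rw [hKdef, Finset.card_image_of_injective _ Subtype.val_injective, hK'.card_eq]
      have hω'le : ω' ≤ n := hω.2 ⟨K, hKc⟩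
      rcases lt_or_eq_of_le hω'le with h | h
      · exact h
      · exfalso
        -- K is a maximum clique of H, so it meets every color class, in particular b's
        have hinj : Set.InjOn f (K : Set W) := by
          intro x hx y hy hxy
          by_contra hne
          exact hf x y (hKc.isClique hx hy hne) hxy
        have hcards : (K.image f).card = (Finset.univ.image f).card := by
          rw [Finset.card_image_of_injOn hinj, hKc.card_eq, h]; exact hfc.symm
        have hKfull : K.image f = Finset.univ.image f :=
          Finset.eq_of_subset_of_card_le
            (by intro c hc; simp only [Finset.mem_image] at hc ⊢
                obtain ⟨x, -, hx⟩ := hc; exact ⟨x, Finset.mem_univ _, hx⟩)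
            (le_of_eq hcards.symm)
        have hbcol : f b ∈ K.image f := by
          rw [hKfull]; exact Finset.mem_image_of_mem f (Finset.mem_univ b)
        obtain ⟨v, hvK, hvb⟩ := Finset.mem_image.1 hbcol
        have hvT : v ∈ T := by
          simp only [hKdef, Finset.mem_image] at hvK
          obtain ⟨x, hx, rfl⟩ := hvK
          exact x.2
        have hveq : v = b := by
          rcases (hTmem v).1 hvT with h' | h'
          · exact h'
          · exact absurd hvb h'
        subst hveq
        rw [h] at hKc
        exact hcase ⟨K, hKc, hvK⟩
    set M : ℕ := (Finset.univ.image f').sup id + 1 with hM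
    have hfM : ∀ x, f' x < M := by
      intro x
      have : f' x ≤ (Finset.univ.image f').sup id :=
        Finset.le_sup (f := id) (Finset.mem_image_of_mem f' (Finset.mem_univ x))
      omega
    set g : Option W → ℕ := fun x => match x with
      | none => M
      | some v => if h : v ∈ T then f' ⟨v, by simpa using h⟩ else M
      with hg
    have gsome_mem : ∀ v (h : v ∈ T), g (some v) = f' ⟨v, by simpa using h⟩ := by
      intro v h; simp [hg, h]
    have gsome_not : ∀ v, v ∉ T → g (some v) = M := by
      intro v h; simp [hg, h]
    have gzero : g none = M := rfl
    have hTnot : ∀ v, v ∉ T → v ≠ b ∧ f v = f b := by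
      intro v h
      rw [hTmem] at h
      push_neg at h
      exact ⟨h.1, h.2⟩
    refine chrom_of_le hn (f := g) ?_ ?_
    · intro u v huv
      cases u with
      | none =>
        cases v with
        | none => exact absurd rfl huv.ne
        | some v =>
          have hvT : v ∈ T := by
            rcases replicate_adj_none_some.1 huv with h | h
            · rw [hTmem]; exact Or.inl h
            · rw [hTmem]; exact Or.inr (hf v b h)
          rw [gzero, gsome_mem v hvT]
          exact (hfM _).ne'
      | some u =>
        cases v with
        | none =>
          have huT : u ∈ T := by
            rcases replicate_adj_some_none.1 huv with h | h
            · rw [hTmem]; exact Or.inl h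
            · rw [hTmem]; exact Or.inr (hf u b h)
          rw [gzero, gsome_mem u huT]
          exact (hfM _).ne
        | some v =>
          have hadj : H.Adj u v := replicate_adj_some_some.1 huv
          by_cases huT : u ∈ T <;> by_cases hvT : v ∈ T
          · rw [gsome_mem u huT, gsome_mem v hvT]
            exact hf' _ _ hadj
          · rw [gsome_mem u huT, gsome_not v hvT]
            exact (hfM _).ne
          · rw [gsome_not u huT, gsome_mem v hvT]
            exact (hfM _).ne'
          · exfalso
            exact hf u v hadj (by rw [(hTnot u huT).2, (hTnot v hvT).2])
    · have hsub : Finset.univ.image g ⊆ insert M (Finset.univ.image f') := by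
        intro c hc
        simp only [Finset.mem_image, Finset.mem_univ, true_and] at hc
        obtain ⟨x, rfl⟩ := hc
        cases x with
        | none => exact Finset.mem_insert_self _ _
        | some v =>
          by_cases h : v ∈ T
          · rw [gsome_mem v h]
            exact Finset.mem_insert_of_mem (Finset.mem_image_of_mem f' (Finset.mem_univ _))
          · rw [gsome_not v h]
            exact Finset.mem_insert_self _ _
      calc colorsUsed g ≤ (insert M (Finset.univ.image f')).card := Finset.card_le_card hsub
        _ ≤ (Finset.univ.image f').card + 1 := Finset.card_insert_le _ _
        _ = ω' + 1 := by unfold colorsUsed at hfc'; omega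
        _ ≤ n := hω'lt

end Core


theorem stmt16 [Fintype V] (G : SimpleGraph V) (a : V) (hG : IsPerfect G) :
    IsPerfect (replicate G a) := by
  classical
  intro s
  by_cases hns : none ∈ s
  · by_cases has : some a ∈ s
    · -- both the original vertex and the copy are present : true replication
      set t : Finset V := s.preimage some (Option.some_injective V).injOn with ht
      have htmem : ∀ v, v ∈ t ↔ some v ∈ s := fun v => Finset.mem_preimage
      have hat : a ∈ (t : Set V) := by
        simp only [Finset.mem_coe]; exact (htmem a).2 has
      have hHperf : IsPerfect (G.induce (t : Set V)) :=
        perfect_of_indSub hG (Function.Embedding.subtype _) (fun _ _ => Iff.rfl)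
      set b : {x // x ∈ (t : Set V)} := ⟨a, hat⟩ with hb
      set ψ : Option {x // x ∈ (t : Set V)} → {x // x ∈ (s : Set (Option V))} := fun o =>
        match o with
        | none => ⟨none, by simpa using hns⟩
        | some v => ⟨some v.1, by
            simp only [Finset.mem_coe]
            exact (htmem v.1).1 (by simpa using v.2)⟩ with hψ
      have hψnone : ψ none = ⟨none, by simpa using hns⟩ := rfl
      have hψsome : ∀ v, ψ (some v) = ⟨some v.1, by
          simp only [Finset.mem_coe]
          exact (htmem v.1).1 (by simpa using v.2)⟩ := fun _ => rfl
      have hbij : Function.Bijective ψ := by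
        constructor
        · intro x y hxy
          cases x with
          | none =>
            cases y with
            | none => rfl
            | some v => exact absurd (congrArg Subtype.val hxy) (by simp [hψ])
          | some u =>
            cases y with
            | none => exact absurd (congrArg Subtype.val hxy) (by simp [hψ])
            | some v =>
              have : u.1 = v.1 := by
                have := congrArg Subtype.val hxy
                simpa [hψ] using this
              rw [Subtype.ext this]
        · rintro ⟨x, hx⟩
          cases x with
          | none => exact ⟨none, rfl⟩
          | some v =>
            have hvt : v ∈ (t : Set V) := by
              simp only [Finset.mem_coe]
              exact (htmem v).2 (by simpa using hx)
            exact ⟨some ⟨v, hvt⟩, rfl⟩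
      refine nice_equiv (G := replicate (G.induce (t : Set V)) b)
        (G' := (replicate G a).induce (s : Set (Option V)))
        (Equiv.ofBijective ψ hbij) ?_ (nice_replicate (b := b) hHperf)
      intro x y
      show (replicate (G.induce (t : Set V)) b).Adj x y ↔
        (replicate G a).Adj (ψ x).1 (ψ y).1
      cases x with
      | none =>
        cases y with
        | none =>
          exact iff_of_false (fun h => h.ne rfl) (fun h => h.ne rfl)
        | some v =>
          rw [hψnone, hψsome]
          rw [replicate_adj_none_some, replicate_adj_none_some]
          constructor
          · rintro (h | h)
            · exact Or.inl (congrArg Subtype.val h)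
            · exact Or.inr h
          · rintro (h | h)
            · exact Or.inl (Subtype.ext h)
            · exact Or.inr h
      | some u =>
        cases y with
        | none =>
          rw [hψnone, hψsome]
          rw [replicate_adj_some_none, replicate_adj_some_none]
          constructor
          · rintro (h | h)
            · exact Or.inl (congrArg Subtype.val h)
            · exact Or.inr h
          · rintro (h | h)
            · exact Or.inl (Subtype.ext h)
            · exact Or.inr h
        | some v =>
          rw [hψsome, hψsome, replicate_adj_some_some, replicate_adj_some_some]
          exact Iff.rfl
    · -- the copy is present but not the original : `none` plays the role of `a`
      have hsome : ∀ x : {x // x ∈ (s : Set (Option V))}, x.1 ≠ some a := by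
        rintro ⟨x, hx⟩ h
        subst h
        exact has (by simpa using hx)
      refine nice_of_indSub hG ⟨fun x => x.1.getD a, ?_⟩ ?_
      · rintro ⟨x, hx⟩ ⟨y, hy⟩ hxy
        simp only at hxy
        cases x with
        | none =>
          cases y with
          | none => rfl
          | some v =>
            simp only [Option.getD_none, Option.getD_some] at hxy
            exact absurd (by rw [hxy] : (⟨some v, hy⟩ : {x // x ∈ (s : Set (Option V))}).1 = some a)
              (hsome ⟨some v, hy⟩)
        | some u =>
          cases y with
          | none =>
            simp only [Option.getD_none, Option.getD_some] at hxy
            exact absurd (by rw [← hxy] : (⟨some u, hx⟩ : {x // x ∈ (s : Set (Option V))}).1 = some a)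
              (hsome ⟨some u, hx⟩)
          | some v =>
            simp only [Option.getD_some] at hxy
            exact Subtype.ext (congrArg some hxy)
      · rintro ⟨x, hx⟩ ⟨y, hy⟩
        show (replicate G a).Adj x y ↔ G.Adj (x.getD a) (y.getD a)
        cases x with
        | none =>
          cases y with
          | none => exact iff_of_false (fun h => h.ne rfl) (fun h => h.ne rfl)
          | some v =>
            have hva : v ≠ a := fun h => hsome ⟨some v, hy⟩ (congrArg some h)
            rw [replicate_adj_none_some]
            simp only [Option.getD_none, Option.getD_some]
            constructor
            · rintro (h | h)
              · exact absurd h hva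
              · exact h.symm
            · intro h; exact Or.inr h.symm
        | some u =>
          cases y with
          | none =>
            have hua : u ≠ a := fun h => hsome ⟨some u, hx⟩ (congrArg some h)
            rw [replicate_adj_some_none]
            simp only [Option.getD_none, Option.getD_some]
            constructor
            · rintro (h | h)
              · exact absurd h hua
              · exact h
            · intro h; exact Or.inr h
          | some v =>
            simp only [Option.getD_some]
            exact replicate_adj_some_some
  · -- the copy is absent : induced subgraph of `G`
    have hsome : ∀ x : {x // x ∈ (s : Set (Option V))}, ∃ v, x.1 = some v := by
      rintro ⟨x, hx⟩
      cases x with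
      | none => exact absurd (by simpa using hx) hns
      | some v => exact ⟨v, rfl⟩
    refine nice_of_indSub hG ⟨fun x => x.1.getD a, ?_⟩ ?_
    · intro x y hxy
      obtain ⟨u, hu⟩ := hsome x
      obtain ⟨v, hv⟩ := hsome y
      have hxy' : (x.1).getD a = (y.1).getD a := hxy
      rw [hu, hv] at hxy'
      simp only [Option.getD_some] at hxy'
      exact Subtype.ext (by rw [hu, hv, hxy'])
    · intro x y
      obtain ⟨u, hu⟩ := hsome x
      obtain ⟨v, hv⟩ := hsome y
      show (replicate G a).Adj x.1 y.1 ↔ G.Adj (x.1.getD a) (y.1.getD a)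
      rw [hu, hv]
      simp only [Option.getD_some]
      exact replicate_adj_some_some
end

section
/- (Generalised Lovász Replication Lemma) If G' is an expansion of a perfect graph G, then G' is perfect. -/
open SimpleGraph

variable {V A B W : Type*}

section AuxLemmas


lemma rep_some_some {H : SimpleGraph V} {a x y : V} :
    (replicate H a).Adj (some x) (some y) ↔ H.Adj x y := by
  simp only [replicate, fromRel_adj]
  constructor
  · rintro ⟨hne, h | h⟩
    · exact h
    · exact h.symm
  · intro h
    exact ⟨by simpa using h.ne, Or.inl h⟩

lemma rep_some_none {H : SimpleGraph V} {a x : V} :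
    (replicate H a).Adj (some x) none ↔ (x = a ∨ H.Adj x a) := by
  simp [replicate, fromRel_adj]

lemma rep_none_some {H : SimpleGraph V} {a x : V} :
    (replicate H a).Adj none (some x) ↔ (x = a ∨ H.Adj x a) := by
  rw [adj_comm]; exact rep_some_none

lemma fincard_coe (t : Finset V) : Fintype.card ↥((t : Set V)) = t.card :=
  Fintype.card_of_subtype t (fun _ => Finset.mem_coe.symm)

lemma le_colorsUsed [Fintype V] {G : SimpleGraph V} {f : V → ℕ} {n : ℕ} {s : Finset V}
    (hf : IsProperColoring G f) (hs : G.IsNClique n s) : n ≤ colorsUsed f := by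
  classical
  have hinj : Set.InjOn f (s : Set V) := by
    intro x hx y hy hxy
    by_contra hne
    exact hf x y (hs.1 hx hy hne) hxy
  calc n = s.card := hs.2.symm
    _ = (s.image f).card := (Finset.card_image_of_injOn hinj).symm
    _ ≤ (Finset.univ.image f).card :=
        Finset.card_le_card (Finset.image_subset_image (Finset.subset_univ s))

lemma isChromNum_of [Fintype V] {G : SimpleGraph V} {n : ℕ}
    (hcl : IsCliqueNum G n) {f : V → ℕ} (hf : IsProperColoring G f)
    (hle : colorsUsed f ≤ n) : IsChromNum G n := by
  obtain ⟨s, hs⟩ := hcl.1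
  refine ⟨⟨f, hf, le_antisymm hle (le_colorsUsed hf hs)⟩, ?_⟩
  rintro k ⟨f', hf', rfl⟩
  exact le_colorsUsed hf' hs

lemma exists_isCliqueNum [Fintype V] (G : SimpleGraph V) : ∃ n, IsCliqueNum G n := by
  classical
  have hne : {k | ∃ s : Finset V, G.IsNClique k s}.Nonempty :=
    ⟨0, ∅, by simp⟩
  have hbdd : BddAbove {k | ∃ s : Finset V, G.IsNClique k s} := by
    refine ⟨Fintype.card V, ?_⟩
    rintro k ⟨s, hs⟩
    calc k = s.card := hs.2.symm
      _ ≤ Fintype.card V := s.card_le_univ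
  exact ⟨_, Nat.sSup_mem hne hbdd, fun k hk => le_csSup hbdd hk⟩

lemma isNClique_map [DecidableEq B] {G : SimpleGraph A} {G' : SimpleGraph B} (e : G ≃g G') {n : ℕ}
    {s : Finset A} (h : G.IsNClique n s) : G'.IsNClique n (s.image e) := by
  constructor
  · intro x hx y hy hxy
    obtain ⟨x', hx', rfl⟩ := Finset.mem_image.mp (Finset.mem_coe.mp hx)
    obtain ⟨y', hy', rfl⟩ := Finset.mem_image.mp (Finset.mem_coe.mp hy)
    have hne : x' ≠ y' := fun hh => hxy (by rw [hh])
    exact e.map_rel_iff.mpr (h.1 hx' hy' hne)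
  · rw [Finset.card_image_of_injective _ e.injective]
    exact h.2

lemma isCliqueNum_map {G : SimpleGraph A} {G' : SimpleGraph B} (e : G ≃g G') {n : ℕ}
    (h : IsCliqueNum G n) : IsCliqueNum G' n := by
  classical
  obtain ⟨⟨s, hs⟩, hub⟩ := h
  refine ⟨⟨s.image e, isNClique_map e hs⟩, ?_⟩
  rintro k ⟨t, ht⟩
  exact hub ⟨t.image e.symm, isNClique_map e.symm ht⟩

lemma colorsUsed_comp [Fintype A] [Fintype B] (f : B → ℕ) (g : A → B)
    (hg : Function.Surjective g) : colorsUsed (f ∘ g) = colorsUsed f := by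
  classical
  unfold colorsUsed
  rw [← Finset.image_image, Finset.image_univ_of_surjective hg]

lemma isChromNum_map [Fintype A] [Fintype B] {G : SimpleGraph A} {G' : SimpleGraph B}
    (e : G ≃g G') {n : ℕ} (h : IsChromNum G n) : IsChromNum G' n := by
  obtain ⟨⟨f, hf, hcard⟩, hlb⟩ := h
  refine ⟨⟨f ∘ e.symm, ?_, ?_⟩, ?_⟩
  · intro u v huv hfe
    exact hf _ _ (e.symm.map_rel_iff.mpr huv) hfe
  · rw [colorsUsed_comp f (⇑e.symm) e.symm.surjective, hcard]
  · rintro k ⟨f', hf', rfl⟩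
    refine hlb ⟨f' ∘ ⇑e, ?_, (colorsUsed_comp f' (⇑e) e.surjective)⟩
    intro u v huv hfe
    exact hf' _ _ (e.map_rel_iff.mpr huv) hfe

lemma nice_map {G : SimpleGraph A} {G' : SimpleGraph B} [Fintype A] [Fintype B]
    (e : G ≃g G') (h : Nice G) : Nice G' :=
  fun n hn => isChromNum_map e (h n (isCliqueNum_map e.symm hn))

def induceFinUnivIso [Fintype V] (G : SimpleGraph V) :
    G.induce ↑(Finset.univ : Finset V) ≃g G where
  toEquiv := ⟨fun x => x.1, fun v => ⟨v, Finset.mem_coe.mpr (Finset.mem_univ v)⟩,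
    fun _ => Subtype.ext rfl, fun _ => rfl⟩
  map_rel_iff' := Iff.rfl

lemma nice_of_isPerfect [Fintype V] {G : SimpleGraph V} (h : IsPerfect G) : Nice G :=
  nice_map (induceFinUnivIso G) (h Finset.univ)

def induceInduceIso (G : SimpleGraph A) (s : Set A) (t : Finset ↥s) [DecidableEq A] :
    (G.induce s).induce (t : Set ↥s) ≃g G.induce ↑(t.image Subtype.val) where
  toEquiv :=
    { toFun := fun x => ⟨x.1.1, by
        refine Finset.mem_coe.mpr (Finset.mem_image.mpr ⟨x.1, ?_, rfl⟩)
        exact Finset.mem_coe.mp x.2⟩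
      invFun := fun y =>
        have hy : ∃ z ∈ t, (z : A) = y.1 := Finset.mem_image.mp (Finset.mem_coe.mp y.2)
        have h1 : y.1 ∈ s := by obtain ⟨z, _, hz2⟩ := hy; exact hz2 ▸ z.2
        ⟨⟨y.1, h1⟩, by
          obtain ⟨z, hz1, hz2⟩ := hy
          have hzz : (⟨y.1, h1⟩ : ↥s) = z := Subtype.ext hz2.symm
          rw [hzz]
          exact Finset.mem_coe.mpr hz1⟩
      left_inv := fun x => Subtype.ext (Subtype.ext rfl)
      right_inv := fun y => Subtype.ext rfl }
  map_rel_iff' := Iff.rfl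

lemma isPerfect_induce [Fintype A] {G : SimpleGraph A} (h : IsPerfect G) (s : Finset A) :
    IsPerfect (G.induce (s : Set A)) := by
  classical
  intro t
  exact nice_map (induceInduceIso G (↑s) t).symm (h (t.image Subtype.val))

def restrictMap (g : B → A) (s : Finset B) [DecidableEq A] :
    ↥((s : Set B)) → ↥((↑(s.image g) : Set A)) :=
  fun b => ⟨g b.1, Finset.mem_coe.mpr (Finset.mem_image.mpr ⟨b.1, Finset.mem_coe.mp b.2, rfl⟩)⟩

lemma isExpansionOf_induce [DecidableEq A] {G : SimpleGraph A} {G' : SimpleGraph B} {g : B → A}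
    (h : IsExpansionOf G G' g) (s : Finset B) :
    IsExpansionOf (G.induce ↑(s.image g)) (G'.induce (s : Set B)) (restrictMap g s) := by
  refine ⟨?_, ?_, ?_⟩
  · rintro ⟨a, ha⟩
    obtain ⟨b, hb, rfl⟩ := Finset.mem_image.mp (Finset.mem_coe.mp ha)
    exact ⟨⟨b, Finset.mem_coe.mpr hb⟩, Subtype.ext rfl⟩
  · rintro ⟨x, hx⟩ ⟨y, hy⟩ hne heq
    have hg : g x = g y := congrArg Subtype.val heq
    have hxy : x ≠ y := fun hh => hne (Subtype.ext hh)
    exact h.2.1 x y hxy hg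
  · rintro ⟨x, hx⟩ ⟨y, hy⟩ hne
    have : g x ≠ g y := fun hh => hne (Subtype.ext hh)
    exact h.2.2 x y this

lemma replicate_nice [Fintype V] {H : SimpleGraph V} (a : V) (hH : IsPerfect H) :
    Nice (replicate H a) := by
  classical
  intro n hn
  obtain ⟨w, hw⟩ := exists_isCliqueNum H
  obtain ⟨⟨c, hc1, hc2⟩, -⟩ := nice_of_isPerfect hH w hw
  have hwn : w ≤ n := by
    obtain ⟨s, hs⟩ := hw.1
    refine hn.2 ⟨s.image some, ?_, ?_⟩
    · intro x hx y hy hne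
      obtain ⟨x', hx', rfl⟩ := Finset.mem_image.mp (Finset.mem_coe.mp hx)
      obtain ⟨y', hy', rfl⟩ := Finset.mem_image.mp (Finset.mem_coe.mp hy)
      have hne' : x' ≠ y' := fun hh => hne (by rw [hh])
      exact rep_some_some.mpr (hs.1 (Finset.mem_coe.mpr hx') (Finset.mem_coe.mpr hy') hne')
    · rw [Finset.card_image_of_injective _ (Option.some_injective V), hs.2]
  by_cases hcase : n ≤ w
  · -- n = w
    have hnw : n = w := le_antisymm hcase hwn
    set S : Finset V := Finset.univ.filter (fun v => c v ≠ c a ∨ v = a) with hSdef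
    have haS : a ∈ S := by simp [hSdef]
    obtain ⟨w0, hw0⟩ := exists_isCliqueNum (H.induce (S : Set V))
    obtain ⟨⟨c0, hc01, hc02⟩, -⟩ := hH S w0 hw0
    have hw0lt : w0 < w := by
      by_contra hge
      push_neg at hge
      obtain ⟨t, ht⟩ := hw0.1
      set u : Finset V := t.image Subtype.val with hudef
      have hu : H.IsNClique w0 u := by
        constructor
        · intro x hx y hy hne
          obtain ⟨x', hx', rfl⟩ := Finset.mem_image.mp (Finset.mem_coe.mp hx)
          obtain ⟨y', hy', rfl⟩ := Finset.mem_image.mp (Finset.mem_coe.mp hy)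
          have hne' : x' ≠ y' := fun hh => hne (by rw [hh])
          exact ht.1 (Finset.mem_coe.mpr hx') (Finset.mem_coe.mpr hy') hne'
        · rw [hudef, Finset.card_image_of_injective _ Subtype.val_injective, ht.2]
      have hle : w0 ≤ w := hw.2 ⟨u, hu⟩
      have hw0w : w0 = w := le_antisymm hle hge
      have hcard_u : u.card = w := by rw [hu.2, hw0w]
      have hinj : Set.InjOn c (u : Set V) := by
        intro x hx y hy hxy
        by_contra hne
        exact hc1 x y (hu.1 hx hy hne) hxy
      have himg : u.image c = Finset.univ.image c := by
        apply Finset.eq_of_subset_of_card_le (Finset.image_subset_image (Finset.subset_univ u))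
        rw [Finset.card_image_of_injOn hinj, hcard_u]
        exact le_of_eq hc2
      have hca : c a ∈ u.image c := by
        rw [himg]; exact Finset.mem_image_of_mem c (Finset.mem_univ a)
      obtain ⟨v, hv, hva⟩ := Finset.mem_image.mp hca
      have hvS : v ∈ S := by
        obtain ⟨v', hv', rfl⟩ := Finset.mem_image.mp hv
        exact v'.2
      have hvA : v = a := by
        rcases (Finset.mem_filter.mp hvS).2 with h | h
        · exact absurd hva h
        · exact h
      have hau : a ∈ u := hvA ▸ hv
      have hadjua : ∀ x ∈ u, x = a ∨ H.Adj x a := by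
        intro x hx
        by_cases hxa : x = a
        · exact Or.inl hxa
        · exact Or.inr (hu.1 (Finset.mem_coe.mpr hx) (Finset.mem_coe.mpr hau) hxa)
      have hK : (replicate H a).IsNClique (w + 1) (insert none (u.image some)) := by
        constructor
        · intro x hx y hy hne
          simp only [Finset.coe_insert, Set.mem_insert_iff, Finset.coe_image,
            Set.mem_image, Finset.mem_coe] at hx hy
          rcases hx with rfl | ⟨xv, hxv, rfl⟩
          · rcases hy with rfl | ⟨yv, hyv, rfl⟩
            · exact absurd rfl hne
            · exact rep_none_some.mpr (hadjua yv hyv)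
          · rcases hy with rfl | ⟨yv, hyv, rfl⟩
            · exact rep_some_none.mpr (hadjua xv hxv)
            · have hne' : xv ≠ yv := fun hh => hne (by rw [hh])
              exact rep_some_some.mpr (hu.1 (Finset.mem_coe.mpr hxv) (Finset.mem_coe.mpr hyv) hne')
        · rw [Finset.card_insert_of_notMem (by simp),
            Finset.card_image_of_injective _ (Option.some_injective V), hcard_u]
      have := hn.2 ⟨_, hK⟩
      omega
    set M := (Finset.univ.image c0).sup id + 1 with hMdef
    have hM : ∀ x : ↥(S : Set V), c0 x < M := by
      intro x
      have : id (c0 x) ≤ (Finset.univ.image c0).sup id :=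
        Finset.le_sup (Finset.mem_image_of_mem c0 (Finset.mem_univ x))
      simp only [id] at this
      omega
    set f : Option V → ℕ :=
      fun o => Option.elim o M
        (fun v => if h : v ∈ S then c0 ⟨v, Finset.mem_coe.mpr h⟩ else M) with hfdef
    have hfS : ∀ (v : V) (h : v ∈ S), f (some v) = c0 ⟨v, Finset.mem_coe.mpr h⟩ := by
      intro v h; simp [hfdef, h]
    have hfnS : ∀ (v : V), v ∉ S → f (some v) = M := by
      intro v h; simp [hfdef, h]
    have hmemS : ∀ (x : V), (x = a ∨ H.Adj x a) → x ∈ S := by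
      intro x hx
      rcases hx with rfl | hx
      · exact haS
      · have : c x ≠ c a := hc1 x a hx
        simp [hSdef, this]
    have hproper : IsProperColoring (replicate H a) f := by
      rintro (_ | x) (_ | y) huv
      · exact absurd huv ((replicate H a).loopless.irrefl none)
      · have hyS : y ∈ S := hmemS y (rep_none_some.mp huv)
        rw [hfS y hyS]
        exact (hM _).ne'
      · have hxS : x ∈ S := hmemS x (rep_some_none.mp huv)
        rw [hfS x hxS]
        exact (hM _).ne
      · have hxy := rep_some_some.mp huv
        by_cases hxS : x ∈ S <;> by_cases hyS : y ∈ S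
        · rw [hfS x hxS, hfS y hyS]
          intro heq
          have hadj : (H.induce (S : Set V)).Adj ⟨x, Finset.mem_coe.mpr hxS⟩
              ⟨y, Finset.mem_coe.mpr hyS⟩ := hxy
          exact hc01 _ _ hadj heq
        · rw [hfS x hxS, hfnS y hyS]
          exact (hM _).ne
        · rw [hfnS x hxS, hfS y hyS]
          exact (hM _).ne'
        · exfalso
          simp only [hSdef, Finset.mem_filter, Finset.mem_univ, true_and, not_or,
            not_not] at hxS hyS
          exact hc1 x y hxy (hxS.1.trans hyS.1.symm)
    have hcount : colorsUsed f ≤ n := by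
      have hsub : Finset.univ.image f ⊆ insert M (Finset.univ.image c0) := by
        intro k hk
        obtain ⟨o, -, rfl⟩ := Finset.mem_image.mp hk
        rcases o with _ | v
        · exact Finset.mem_insert_self _ _
        · by_cases h : v ∈ S
          · rw [hfS v h]
            exact Finset.mem_insert_of_mem (Finset.mem_image_of_mem _ (Finset.mem_univ _))
          · rw [hfnS v h]
            exact Finset.mem_insert_self _ _
      have h1 : colorsUsed f ≤ (Finset.univ.image c0).card + 1 :=
        (Finset.card_le_card hsub).trans (Finset.card_insert_le _ _)
      have h2 : (Finset.univ.image c0).card = w0 := hc02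
      omega
    exact isChromNum_of hn hproper hcount
  · push_neg at hcase
    have hn1 : n ≤ w + 1 := by
      obtain ⟨K, hK⟩ := hn.1
      set u : Finset V := Finset.univ.filter (fun v => some v ∈ K) with hudef
      have hmap : K.erase none = u.image some := by
        ext o
        rcases o with _ | v
        · simp
        · simp [hudef]
      have hucl : H.IsNClique u.card u := by
        constructor
        · intro x hx y hy hne
          have hx' : some x ∈ K := (Finset.mem_filter.mp (Finset.mem_coe.mp hx)).2
          have hy' : some y ∈ K := (Finset.mem_filter.mp (Finset.mem_coe.mp hy)).2
          have hne' : (some x : Option V) ≠ some y := by simpa using hne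
          exact rep_some_some.mp (hK.1 (Finset.mem_coe.mpr hx') (Finset.mem_coe.mpr hy') hne')
        · rfl
      have h1 : u.card ≤ w := hw.2 ⟨u, hucl⟩
      have h2 : K.card - 1 ≤ (K.erase none).card := Finset.pred_card_le_card_erase
      have h3 : (K.erase none).card = u.card := by
        rw [hmap, Finset.card_image_of_injective _ (Option.some_injective V)]
      have h4 : K.card = n := hK.2
      omega
    have hnw : n = w + 1 := by omega
    set M := (Finset.univ.image c).sup id + 1 with hMdef
    have hM : ∀ x : V, c x < M := by
      intro x
      have : id (c x) ≤ (Finset.univ.image c).sup id :=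
        Finset.le_sup (Finset.mem_image_of_mem c (Finset.mem_univ x))
      simp only [id] at this
      omega
    set f : Option V → ℕ := fun o => Option.elim o M c with hfdef
    have hproper : IsProperColoring (replicate H a) f := by
      rintro (_ | x) (_ | y) huv
      · exact absurd huv ((replicate H a).loopless.irrefl none)
      · exact (hM y).ne'
      · exact (hM x).ne
      · exact hc1 x y (rep_some_some.mp huv)
    have hcount : colorsUsed f ≤ n := by
      have hsub : Finset.univ.image f ⊆ insert M (Finset.univ.image c) := by
        intro k hk
        obtain ⟨o, -, rfl⟩ := Finset.mem_image.mp hk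
        rcases o with _ | v
        · exact Finset.mem_insert_self _ _
        · exact Finset.mem_insert_of_mem (Finset.mem_image_of_mem _ (Finset.mem_univ _))
      have h1 : colorsUsed f ≤ (Finset.univ.image c).card + 1 :=
        (Finset.card_le_card hsub).trans (Finset.card_insert_le _ _)
      have h2 : (Finset.univ.image c).card = w := hc2
      omega
    exact isChromNum_of hn hproper hcount

universe u' v'

lemma main_expansion : ∀ (n : ℕ) {A : Type u'} {B : Type v'} [Fintype A] [Fintype B]
    (G : SimpleGraph A) (G' : SimpleGraph B) (g : B → A),
    Fintype.card B ≤ n → IsExpansionOf G G' g → IsPerfect G → Nice G' := by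
  intro n
  induction n using Nat.strong_induction_on with
  | _ n IH =>
    intro A B _ _ G G' g hcard hexp hG
    classical
    by_cases hinj : Function.Injective g
    · have iso : G' ≃g G := by
        refine ⟨Equiv.ofBijective g ⟨hinj, hexp.1⟩, ?_⟩
        intro x y
        show G.Adj (g x) (g y) ↔ G'.Adj x y
        by_cases hxy : x = y
        · subst hxy; simp
        · have hg : g x ≠ g y := fun hh => hxy (hinj hh)
          exact (hexp.2.2 x y hg).symm
      exact nice_map iso.symm (nice_of_isPerfect hG)
    · obtain ⟨b1, b2, hgeq, hne⟩ := Function.not_injective_iff.mp hinj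
      set s : Finset B := Finset.univ.erase b2 with hsdef
      have hb1s : b1 ∈ s := Finset.mem_erase.mpr ⟨hne, Finset.mem_univ _⟩
      have hscard : s.card + 1 = Fintype.card B := by
        rw [hsdef, Finset.card_erase_of_mem (Finset.mem_univ _), Finset.card_univ]
        have h1 : 0 < Fintype.card B := Fintype.card_pos_iff.mpr ⟨b2⟩
        omega
      have hexp2 := isExpansionOf_induce hexp s
      have hGi : IsPerfect (G.induce ↑(s.image g)) := isPerfect_induce hG _
      have hperf : IsPerfect (G'.induce (s : Set B)) := by
        intro t
        have hcardt : Fintype.card ↥((t : Set ↥((s : Set B)))) < n := by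
          rw [fincard_coe]
          have h1 : t.card ≤ Fintype.card ↥((s : Set B)) := t.card_le_univ
          rw [fincard_coe] at h1
          omega
        exact IH _ hcardt _ _ _ le_rfl
          (isExpansionOf_induce hexp2 t) (isPerfect_induce hGi _)
      set c : ↥((s : Set B)) := ⟨b1, Finset.mem_coe.mpr hb1s⟩ with hcdef
      have hnice := replicate_nice c hperf
      have hb2 : ∀ x : ↥((s : Set B)), (x : B) ≠ b2 :=
        fun x => (Finset.mem_erase.mp (Finset.mem_coe.mp x.2)).1
      let φ : Option ↥((s : Set B)) ≃ B :=
        { toFun := fun o => Option.elim o b2 Subtype.val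
          invFun := fun b => if h : b = b2 then none
            else some ⟨b, Finset.mem_coe.mpr (Finset.mem_erase.mpr ⟨h, Finset.mem_univ _⟩)⟩
          left_inv := by
            rintro (_ | x)
            · simp
            · simp [hb2 x]
          right_inv := by
            intro b
            by_cases h : b = b2 <;> simp [h] }
      have key : ∀ y : ↥((s : Set B)), G'.Adj b2 ↑y ↔ (y = c ∨ G'.Adj ↑y b1) := by
        intro y
        constructor
        · intro h
          by_cases h1 : (y : B) = b1
          · exact Or.inl (Subtype.ext h1)
          · right
            by_cases h2 : g (y : B) = g b1
            · exact hexp.2.1 _ _ h1 h2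
            · have h3 : g (y : B) ≠ g b2 := by rw [← hgeq]; exact h2
              have h4 : G.Adj (g (y : B)) (g b2) := (hexp.2.2 _ _ h3).mp h.symm
              refine (hexp.2.2 _ _ h2).mpr ?_
              rw [hgeq]; exact h4
        · intro h
          rcases h with rfl | h
          · exact hexp.2.1 b2 b1 (Ne.symm hne) hgeq.symm
          · by_cases h2 : g (y : B) = g b2
            · exact (hexp.2.1 _ _ (hb2 y) h2).symm
            · have h3 : g (y : B) ≠ g b1 := by rw [hgeq]; exact h2
              have h4 : G.Adj (g (y : B)) (g b1) := (hexp.2.2 _ _ h3).mp h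
              have h5 : G'.Adj (y : B) b2 := (hexp.2.2 _ _ h2).mpr (by rw [← hgeq]; exact h4)
              exact h5.symm
      have iso : replicate (G'.induce (s : Set B)) c ≃g G' := by
        refine ⟨φ, ?_⟩
        rintro (_ | x) (_ | y)
        · constructor
          · intro h
            exact absurd h (G'.loopless.irrefl b2)
          · intro h
            exact absurd h ((replicate _ _).loopless.irrefl none)
        · rw [rep_none_some]
          exact key y
        · rw [rep_some_none]
          constructor
          · intro h
            exact (key x).mp h.symm
          · intro h
            exact ((key x).mpr h).symm
        · rw [rep_some_some]
          exact Iff.rfl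
      exact nice_map iso hnice

end AuxLemmas

theorem stmt17 [Fintype A] [Fintype B] (G : SimpleGraph A) (G' : SimpleGraph B)
    (g : B → A) (h : IsExpansionOf G G' g) (hG : IsPerfect G) :
    IsPerfect G' := by
  classical
  intro s
  exact main_expansion (Fintype.card ↥((s : Set B))) _ _ _ le_rfl
    (isExpansionOf_induce h s) (isPerfect_induce hG (s.image g))
end

section
/- If G is a perfect graph with independence number n, then G admits a clique cover consisting of exactly n cliques. Consequently (Weak Perfect Graph Theorem), the complement of any perfect graph is perfect. -/
open SimpleGraph

variable {V A B W : Type*}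

/-- proper coloring on a subset -/
def properOn (G : SimpleGraph V) (s : Finset V) (f : V → ℕ) : Prop :=
  ∀ u ∈ s, ∀ v ∈ s, G.Adj u v → f u ≠ f v

def cwSet (G : SimpleGraph V) (s : Finset V) : Set ℕ := {k | ∃ t ⊆ s, G.IsNClique k t}
def cnSet (G : SimpleGraph V) (s : Finset V) : Set ℕ :=
  {k | ∃ f : V → ℕ, properOn G s f ∧ (s.image f).card = k}

noncomputable def cw (G : SimpleGraph V) (s : Finset V) : ℕ := sSup (cwSet G s)
noncomputable def cn (G : SimpleGraph V) (s : Finset V) : ℕ := sInf (cnSet G s)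

lemma cwSet_nonempty (G : SimpleGraph V) (s : Finset V) : (cwSet G s).Nonempty :=
  ⟨0, ∅, Finset.empty_subset s, by simp [SimpleGraph.isNClique_empty]⟩

lemma cwSet_bddAbove (G : SimpleGraph V) (s : Finset V) : BddAbove (cwSet G s) := by
  refine ⟨s.card, ?_⟩
  rintro k ⟨t, hts, ht⟩
  exact ht.2 ▸ Finset.card_le_card hts

lemma cw_isGreatest (G : SimpleGraph V) (s : Finset V) : IsGreatest (cwSet G s) (cw G s) :=
  ⟨Nat.sSup_mem (cwSet_nonempty G s) (cwSet_bddAbove G s),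
   fun _ hk => le_csSup (cwSet_bddAbove G s) hk⟩

lemma cnSet_nonempty [Fintype V] (G : SimpleGraph V) (s : Finset V) : (cnSet G s).Nonempty := by
  classical
  refine ⟨_, fun v => ((Fintype.equivFin V v : ℕ)), fun u _ v _ hadj h => ?_, rfl⟩
  exact (G.ne_of_adj hadj) ((Fintype.equivFin V).injective (Fin.val_injective h))

lemma cn_isLeast [Fintype V] (G : SimpleGraph V) (s : Finset V) : IsLeast (cnSet G s) (cn G s) :=
  ⟨Nat.sInf_mem (cnSet_nonempty G s), fun _ hk => Nat.sInf_le hk⟩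

lemma cw_mono (G : SimpleGraph V) {t s : Finset V} (h : t ⊆ s) : cw G t ≤ cw G s := by
  refine csSup_le (cwSet_nonempty G t) (fun k hk => ?_)
  obtain ⟨u, hu, hc⟩ := hk
  exact (cw_isGreatest G s).2 ⟨u, hu.trans h, hc⟩

lemma cn_le_of_properOn [Fintype V] (G : SimpleGraph V) {s : Finset V} {f : V → ℕ}
    (hf : properOn G s f) : cn G s ≤ (s.image f).card :=
  Nat.sInf_le ⟨f, hf, rfl⟩

/-- χ ≥ ω (relative form) -/
lemma cw_le_cn [Fintype V] (G : SimpleGraph V) (s : Finset V) : cw G s ≤ cn G s := by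
  classical
  obtain ⟨f, hf, hcard⟩ := (cn_isLeast G s).1
  obtain ⟨t, hts, ht⟩ := (cw_isGreatest G s).1
  have hinj : Set.InjOn f t := by
    intro x hx y hy hxy
    by_contra hne
    exact hf x (hts (by simpa using hx)) y (hts (by simpa using hy))
      (ht.1 (by simpa using hx) (by simpa using hy) hne) hxy
  calc cw G s = t.card := ht.2.symm
    _ = (t.image f).card := (Finset.card_image_of_injOn hinj).symm
    _ ≤ (s.image f).card := Finset.card_le_card (Finset.image_subset_image hts)
    _ = cn G s := hcard

lemma isNClique_compl_iff (G : SimpleGraph V) (t : Finset V) (k : ℕ) :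
    Gᶜ.IsNClique k t ↔ (IsStableSet G (t : Set V) ∧ t.card = k) := by
  constructor
  · rintro ⟨hc, hcard⟩
    refine ⟨fun x hx y hy hxy => ?_, hcard⟩
    by_cases hne : x = y
    · exact G.loopless.irrefl y (hne ▸ hxy)
    · exact (hc hx hy hne).2 hxy
  · rintro ⟨hs, hcard⟩
    exact ⟨fun x hx y hy hne => ⟨hne, fun h => hs x hx y hy h⟩, hcard⟩

lemma cwSet_compl_eq (G : SimpleGraph V) (s : Finset V) :
    cwSet Gᶜ s = {k | ∃ t ⊆ s, IsStableSet G (t : Set V) ∧ t.card = k} := by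
  ext k; simp only [cwSet, Set.mem_setOf_eq, isNClique_compl_iff]

lemma clique_inter_stable [DecidableEq V] (G : SimpleGraph V) {K A : Finset V}
    (hK : G.IsClique (K : Set V)) (hA : IsStableSet G (A : Set V)) :
    (K ∩ A).card ≤ 1 := by
  refine Finset.card_le_one.mpr (fun x hx y hy => ?_)
  simp only [Finset.mem_inter] at hx hy
  by_contra hne
  exact hA x hx.2 y hy.2 (hK (by exact_mod_cast hx.1) (by exact_mod_cast hy.1) hne)

/-- fibers of a proper coloring are stable -/
lemma fiber_stable [DecidableEq V] (G : SimpleGraph V) {s : Finset V} {f : V → ℕ}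
    (hf : properOn G s f) (c : ℕ) : IsStableSet G ((s.filter (fun v => f v = c) : Finset V) : Set V) := by
  intro x hx y hy hadj
  simp only [Finset.coe_filter, Set.mem_setOf_eq] at hx hy
  exact hf x hx.1 y hy.1 hadj (hx.2.trans hy.2.symm)

/-- C1 : n ≤ χ · α -/
lemma card_le_cn_mul [Fintype V] (G : SimpleGraph V) (s : Finset V) :
    s.card ≤ cn G s * cw Gᶜ s := by
  classical
  obtain ⟨f, hf, hcard⟩ := (cn_isLeast G s).1
  rw [Finset.card_eq_sum_card_fiberwise (fun x hx => Finset.mem_image_of_mem f hx)]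
  calc ∑ c ∈ s.image f, (s.filter (fun v => f v = c)).card
      ≤ (s.image f).card * cw Gᶜ s := by
        refine Finset.sum_le_card_nsmul _ _ _ (fun c _ => ?_)
        refine (cw_isGreatest Gᶜ s).2 ⟨s.filter (fun v => f v = c), Finset.filter_subset _ _, ?_⟩
        exact (isNClique_compl_iff G _ _).mpr ⟨fiber_stable G hf c, rfl⟩
    _ = cn G s * cw Gᶜ s := by rw [hcard]

/-- C5 : adding back one stable set costs one color -/
lemma cn_le_sdiff_add_one [Fintype V] [DecidableEq V] (G : SimpleGraph V) (s A : Finset V)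
    (hA : IsStableSet G (A : Set V)) : cn G s ≤ cn G (s \ A) + 1 := by
  classical
  obtain ⟨f, hf, hcard⟩ := (cn_isLeast G (s \ A)).1
  set N := ((s \ A).image f).sup id + 1 with hN
  set f' : V → ℕ := fun v => if v ∈ A then N else f v with hf'
  have hfval : ∀ v ∈ s \ A, f' v = f v := by
    intro v hv; simp only [hf']; rw [if_neg (Finset.mem_sdiff.mp hv).2]
  have hflt : ∀ v ∈ s \ A, f' v < N := by
    intro v hv; rw [hfval v hv]
    exact Nat.lt_succ_of_le (Finset.le_sup (f := id) (Finset.mem_image_of_mem f hv))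
  have hproper : properOn G s f' := by
    intro u hu v hv hadj heq
    by_cases huA : u ∈ A <;> by_cases hvA : v ∈ A
    · exact hA u huA v hvA hadj
    · have := hflt v (Finset.mem_sdiff.mpr ⟨hv, hvA⟩)
      rw [← heq] at this; simp only [hf', if_pos huA] at this; exact lt_irrefl _ this
    · have := hflt u (Finset.mem_sdiff.mpr ⟨hu, huA⟩)
      rw [heq] at this; simp only [hf', if_pos hvA] at this; exact lt_irrefl _ this
    · exact hf u (Finset.mem_sdiff.mpr ⟨hu, huA⟩) v (Finset.mem_sdiff.mpr ⟨hv, hvA⟩) hadj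
        (by rwa [← hfval u (Finset.mem_sdiff.mpr ⟨hu, huA⟩), ← hfval v (Finset.mem_sdiff.mpr ⟨hv, hvA⟩)])
  have himg : s.image f' ⊆ insert N ((s \ A).image f) := by
    intro b hb
    obtain ⟨v, hv, rfl⟩ := Finset.mem_image.mp hb
    by_cases hvA : v ∈ A
    · simp [hf', if_pos hvA]
    · rw [hfval v (Finset.mem_sdiff.mpr ⟨hv, hvA⟩)]
      exact Finset.mem_insert_of_mem (Finset.mem_image_of_mem f (Finset.mem_sdiff.mpr ⟨hv, hvA⟩))
  calc cn G s ≤ (s.image f').card := cn_le_of_properOn G hproper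
    _ ≤ (insert N ((s \ A).image f)).card := Finset.card_le_card himg
    _ ≤ ((s \ A).image f).card + 1 := Finset.card_insert_le _ _
    _ = cn G (s \ A) + 1 := by rw [hcard]

lemma one_mem_cwSet (G : SimpleGraph V) {s : Finset V} (hs : s.Nonempty) : 1 ∈ cwSet G s := by
  obtain ⟨v, hv⟩ := hs
  exact ⟨{v}, Finset.singleton_subset_iff.mpr hv, by simp⟩

lemma cw_empty (G : SimpleGraph V) : cw G ∅ = 0 := by
  have h := (cw_isGreatest G ∅).1
  obtain ⟨t, hts, ht⟩ := h
  rw [Finset.subset_empty.mp hts] at ht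
  rw [← ht.2]; simp

lemma cn_empty [Fintype V] (G : SimpleGraph V) : cn G ∅ = 0 := by
  refine le_antisymm ?_ (Nat.zero_le _)
  have : cn G ∅ ≤ ((∅ : Finset V).image (fun _ => 0)).card :=
    cn_le_of_properOn G (fun u hu => by simp at hu)
  simpa using this

lemma cliqueSet_induce_eq (G : SimpleGraph V) (s : Finset V) :
    {k | ∃ t' : Finset ((s : Set V)), (G.induce (s : Set V)).IsNClique k t'} = cwSet G s := by
  ext k
  simp only [Set.mem_setOf_eq, cwSet]
  constructor
  · rintro ⟨t', ht'⟩
    refine ⟨t'.map ⟨Subtype.val, Subtype.val_injective⟩, ?_, ?_, ?_⟩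
    · intro x hx
      obtain ⟨x', _, rfl⟩ := Finset.mem_map.mp hx
      exact Finset.mem_coe.mp x'.2
    · intro x hx y hy hne
      simp only [Finset.coe_map, Set.mem_image, Finset.mem_coe] at hx hy
      obtain ⟨x', hx', rfl⟩ := hx
      obtain ⟨y', hy', rfl⟩ := hy
      have hne' : x' ≠ y' := fun h => hne (by rw [h])
      exact ht'.1 (Finset.mem_coe.mpr hx') (Finset.mem_coe.mpr hy') hne'
    · rw [Finset.card_map]; exact ht'.2
  · rintro ⟨t, hts, ht⟩
    refine ⟨t.attach.map ⟨fun x => (⟨x.1, Finset.mem_coe.mpr (hts x.2)⟩ : (s : Set V)),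
      fun a b hab => Subtype.ext (by simpa using congrArg Subtype.val hab)⟩, ?_, ?_⟩
    · intro x hx y hy hne
      simp only [Finset.coe_map, Set.mem_image, Finset.mem_coe, Finset.mem_attach, true_and,
        Function.Embedding.coeFn_mk, Finset.mem_attach] at hx hy
      obtain ⟨x', rfl⟩ := hx
      obtain ⟨y', rfl⟩ := hy
      have : (x' : V) ≠ (y' : V) := fun h => hne (by exact Subtype.ext h)
      exact ht.1 (Finset.mem_coe.mpr x'.2) (Finset.mem_coe.mpr y'.2) this
    · rw [Finset.card_map, Finset.card_attach]; exact ht.2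

lemma colorSet_induce_eq [Fintype V] (G : SimpleGraph V) (s : Finset V) :
    {k | ∃ f' : ((s : Set V)) → ℕ, IsProperColoring (G.induce (s : Set V)) f' ∧ colorsUsed f' = k}
      = cnSet G s := by
  classical
  ext k
  simp only [Set.mem_setOf_eq, cnSet]
  constructor
  · rintro ⟨f', hf', rfl⟩
    refine ⟨fun v => if h : v ∈ s then f' ⟨v, Finset.mem_coe.mpr h⟩ else 0, ?_, ?_⟩
    · intro u hu v hv hadj heq
      refine hf' ⟨u, Finset.mem_coe.mpr hu⟩ ⟨v, Finset.mem_coe.mpr hv⟩ (by simpa using hadj) ?_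
      simpa [dif_pos hu, dif_pos hv] using heq
    · show (s.image _).card = (Finset.univ.image f').card
      congr 1
      apply Finset.Subset.antisymm
      · intro b hb
        obtain ⟨v, hv, rfl⟩ := Finset.mem_image.mp hb
        rw [dif_pos hv]
        exact Finset.mem_image_of_mem _ (Finset.mem_univ _)
      · intro b hb
        obtain ⟨x, -, rfl⟩ := Finset.mem_image.mp hb
        refine Finset.mem_image.mpr ⟨x.1, Finset.mem_coe.mp x.2, ?_⟩
        rw [dif_pos (Finset.mem_coe.mp x.2)]
  · rintro ⟨f, hf, rfl⟩
    refine ⟨fun x => f x.1, ?_, ?_⟩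
    · intro u v hadj heq
      exact hf u.1 (Finset.mem_coe.mp u.2) v.1 (Finset.mem_coe.mp v.2) (by simpa using hadj) heq
    · unfold colorsUsed
      congr 1
      apply Finset.Subset.antisymm
      · intro b hb
        obtain ⟨x, -, rfl⟩ := Finset.mem_image.mp hb
        exact Finset.mem_image.mpr ⟨x.1, Finset.mem_coe.mp x.2, rfl⟩
      · intro b hb
        obtain ⟨v, hv, rfl⟩ := Finset.mem_image.mp hb
        exact Finset.mem_image.mpr ⟨⟨v, Finset.mem_coe.mpr hv⟩, Finset.mem_univ _, rfl⟩

lemma nice_induce_iff [Fintype V] (G : SimpleGraph V) (s : Finset V) :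
    Nice (G.induce (s : Set V)) ↔ cn G s = cw G s := by
  constructor
  · intro h
    have h1 : IsCliqueNum (G.induce (s : Set V)) (cw G s) := by
      unfold IsCliqueNum; rw [cliqueSet_induce_eq]; exact cw_isGreatest G s
    have h2 := h _ h1
    unfold IsChromNum at h2; rw [colorSet_induce_eq] at h2
    exact ((cn_isLeast G s).unique h2)
  · intro h n hn
    unfold IsCliqueNum at hn; rw [cliqueSet_induce_eq] at hn
    have : n = cw G s := hn.unique (cw_isGreatest G s)
    unfold IsChromNum; rw [colorSet_induce_eq, this, ← h]
    exact cn_isLeast G s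

lemma key [Fintype V] (G : SimpleGraph V) :
    ∀ s : Finset V, (∀ t ⊆ s, t.card ≤ cw G t * cw Gᶜ t) → cn G s = cw G s := by
  classical
  intro s
  induction s using Finset.strongInductionOn with
  | _ s IH =>
  intro hbound
  by_contra hne
  have hlt : cw G s < cn G s := lt_of_le_of_ne (cw_le_cn G s) (fun h => hne h.symm)
  -- s is nonempty
  rcases Finset.eq_empty_or_nonempty s with rfl | hs
  · rw [cw_empty, cn_empty] at hlt; exact lt_irrefl _ hlt
  set ω := cw G s with hω
  set α := cw Gᶜ s with hα
  have hω1 : 1 ≤ ω := (cw_isGreatest G s).2 (one_mem_cwSet G hs)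
  have hα1 : 1 ≤ α := (cw_isGreatest Gᶜ s).2 (one_mem_cwSet Gᶜ hs)
  have hχ : ω + 1 ≤ cn G s := hlt
  -- maximum stable set A₀
  obtain ⟨A₀, hA₀s, hA₀c⟩ := (cw_isGreatest Gᶜ s).1
  have hA₀stable : IsStableSet G (A₀ : Set V) := ((isNClique_compl_iff G A₀ α).mp hA₀c).1
  have hA₀card : A₀.card = α := hA₀c.2
  -- generic step: for any nonempty stable B ⊆ s, cw (s \ B) = ω and cn (s \ B) = ω
  have hstep : ∀ B : Finset V, B ⊆ s → B.Nonempty → IsStableSet G (B : Set V) →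
      cn G (s \ B) = ω ∧ cw G (s \ B) = ω := by
    intro B hBs hBne hBst
    have hssub : s \ B ⊂ s := by
      obtain ⟨b, hb⟩ := hBne
      refine Finset.ssubset_iff_of_subset (Finset.sdiff_subset) |>.mpr ⟨b, hBs hb, by simp [hb]⟩
    have hIH : cn G (s \ B) = cw G (s \ B) :=
      IH _ hssub (fun u hu => hbound u (hu.trans Finset.sdiff_subset))
    have h1 : cw G (s \ B) ≤ ω := cw_mono G Finset.sdiff_subset
    have h2 : cn G s ≤ cn G (s \ B) + 1 := cn_le_sdiff_add_one G s B hBst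
    have h3 : ω ≤ cn G (s \ B) := by omega
    rw [hIH] at h3 ⊢
    omega
  -- colorings of s minus a vertex of A₀
  have hcol : ∀ a ∈ A₀, ∃ f, properOn G (s \ {a}) f ∧ ((s \ {a}).image f).card = ω := by
    intro a ha
    have hst : IsStableSet G (({a} : Finset V) : Set V) := by
      intro x hx y hy
      simp only [Finset.coe_singleton, Set.mem_singleton_iff] at hx hy
      rw [hx, hy]; exact G.loopless.irrefl a
    have := (hstep {a} (Finset.singleton_subset_iff.mpr (hA₀s ha)) ⟨a, Finset.mem_singleton_self a⟩ hst).1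
    obtain ⟨f, hf, hc⟩ := (cn_isLeast G (s \ {a})).1
    exact ⟨f, hf, by rw [hc, this]⟩
  choose f hf1 hf2 using hcol
  -- color classes
  let E : (a : V) → (ha : a ∈ A₀) → (Fin ω ≃ ((s \ {a}).image (f a ha) : Finset ℕ)) :=
    fun a ha => (Finset.equivFinOfCardEq (hf2 a ha)).symm
  let B : (a : V) → (ha : a ∈ A₀) → Fin ω → Finset V := fun a ha j =>
    (s \ {a}).filter (fun v => f a ha v = ((E a ha j : ℕ)))
  -- the family of stable sets
  let ι := Option ({x // x ∈ A₀} × Fin ω)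
  let A : ι → Finset V := fun i => match i with
    | none => A₀
    | some (a, j) => B a.1 a.2 j
  have hAsub : ∀ i, A i ⊆ s := by
    rintro (_ | ⟨a, j⟩)
    · exact hA₀s
    · exact (Finset.filter_subset _ _).trans Finset.sdiff_subset
  have hAstable : ∀ i, IsStableSet G (A i : Set V) := by
    rintro (_ | ⟨a, j⟩)
    · exact hA₀stable
    · exact fiber_stable G (hf1 a.1 a.2) _
  have hAne : ∀ i, (A i).Nonempty := by
    rintro (_ | ⟨a, j⟩)
    · have h0 : 0 < A₀.card := by omega
      exact Finset.card_pos.mp h0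
    · have hc : ((E a.1 a.2 j : ℕ)) ∈ (s \ {a.1}).image (f a.1 a.2) := (E a.1 a.2 j).2
      obtain ⟨v, hv, hfv⟩ := Finset.mem_image.mp hc
      exact ⟨v, Finset.mem_filter.mpr ⟨hv, hfv⟩⟩
  -- the cliques
  have hKex : ∀ i : ι, ∃ K, K ⊆ s \ A i ∧ G.IsNClique ω K := by
    intro i
    have := (hstep (A i) (hAsub i) (hAne i) (hAstable i)).2
    obtain ⟨K, hKs, hKc⟩ := this ▸ (cw_isGreatest G (s \ A i)).1
    exact ⟨K, hKs, hKc⟩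
  choose K hK1 hK2 using hKex
  -- the sum lemma
  have hsum : ∀ K' : Finset V, K' ⊆ s → G.IsNClique ω K' →
      ∑ i : ι, (K' ∩ A i).card = α * ω := by
    intro K' hK's hK'c
    rw [Fintype.sum_option, Fintype.sum_prod_type]
    have hinner : ∀ a : {x // x ∈ A₀}, ∑ j : Fin ω, (K' ∩ A (some (a, j))).card
        = (K'.erase a.1).card := by
      intro a
      have hKe : K' ∩ (s \ {a.1}) = K'.erase a.1 := by
        ext x
        simp only [Finset.mem_inter, Finset.mem_sdiff, Finset.mem_singleton, Finset.mem_erase]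
        exact ⟨fun h => ⟨h.2.2, h.1⟩, fun h => ⟨h.2, hK's h.2, h.1⟩⟩
      have hfib : (K'.erase a.1).card =
          ∑ c ∈ (s \ {a.1}).image (f a.1 a.2), ((K'.erase a.1).filter (fun v => f a.1 a.2 v = c)).card := by
        refine Finset.card_eq_sum_card_fiberwise (fun x hx => ?_)
        refine Finset.mem_image_of_mem _ ?_
        rw [← hKe] at hx
        exact (Finset.mem_inter.mp hx).2
      rw [hfib, ← Finset.sum_attach ((s \ {a.1}).image (f a.1 a.2))
        (fun c => ((K'.erase a.1).filter (fun v => f a.1 a.2 v = c)).card),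
        ← Finset.univ_eq_attach]
      rw [← Equiv.sum_comp (E a.1 a.2)
        (fun c => ((K'.erase a.1).filter (fun v => f a.1 a.2 v = (c : ℕ))).card)]
      refine Finset.sum_congr rfl (fun j _ => ?_)
      have hAeq : A (some (a, j)) =
          (s \ {(a : V)}).filter (fun v => f a.1 a.2 v = ((E a.1 a.2 j : ℕ))) := rfl
      rw [hAeq]
      congr 1
      ext x
      simp only [Finset.mem_filter, Finset.mem_erase, Finset.mem_inter, Finset.mem_sdiff,
        Finset.mem_singleton]
      have hKsub : ∀ y, y ∈ K' → y ∈ s := fun y hy => hK's hy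
      tauto
    rw [Finset.sum_congr rfl (fun a _ => hinner a)]
    -- now ∑ a : A₀, (K'.erase ↑a).card + (K' ∩ A₀).card = α * ω + ... arithmetic
    have hterm : ∀ a : {x // x ∈ A₀},
        (K'.erase a.1).card + (if a.1 ∈ K' then 1 else 0) = ω := by
      intro a
      by_cases h : a.1 ∈ K'
      · rw [if_pos h, Finset.card_erase_add_one h, hK'c.2]
      · rw [if_neg h, Finset.erase_eq_of_notMem h, add_zero]; exact hK'c.2
    have hsum2 : ∑ a : {x // x ∈ A₀}, ((K'.erase a.1).card + (if a.1 ∈ K' then 1 else 0))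
        = α * ω := by
      rw [Finset.sum_congr rfl (fun a _ => hterm a), Finset.sum_const, Finset.card_univ,
        Fintype.card_coe, hA₀card, smul_eq_mul]
    rw [Finset.sum_add_distrib] at hsum2
    have hind : ∑ a : {x // x ∈ A₀}, (if a.1 ∈ K' then 1 else 0) = (K' ∩ A₀).card := by
      rw [Finset.univ_eq_attach, Finset.sum_attach A₀ (fun x => if x ∈ K' then 1 else 0)]
      rw [← Finset.card_filter, Finset.filter_mem_eq_inter, Finset.inter_comm]
    rw [hind] at hsum2
    show (K' ∩ A₀).card + _ = α * ω
    omega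
  -- each K i meets every other A j exactly once
  have hA_K_disj : ∀ i : ι, (K i ∩ A i).card = 0 := by
    intro i
    rw [Finset.card_eq_zero, Finset.eq_empty_iff_forall_notMem]
    intro x hx
    rw [Finset.mem_inter] at hx
    exact (Finset.mem_sdiff.mp (hK1 i hx.1)).2 hx.2
  have hle1 : ∀ i j : ι, (K i ∩ A j).card ≤ 1 :=
    fun i j => clique_inter_stable G (hK2 i).1 (hAstable j)
  have hcardι : Fintype.card ι = α * ω + 1 := by
    show Fintype.card (Option _) = _
    rw [Fintype.card_option, Fintype.card_prod, Fintype.card_coe, hA₀card, Fintype.card_fin]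
  have hone : ∀ i j : ι, j ≠ i → (K i ∩ A j).card = 1 := by
    intro i j hji
    by_contra hne1
    have hj0 : (K i ∩ A j).card = 0 := by
      have := hle1 i j; omega
    have hSi := hsum (K i) ((hK1 i).trans Finset.sdiff_subset) (hK2 i)
    have e1 : ∑ l ∈ Finset.univ.erase i, (K i ∩ A l).card + (K i ∩ A i).card
        = ∑ l : ι, (K i ∩ A l).card := Finset.sum_erase_add _ _ (Finset.mem_univ i)
    have hji' : j ∈ Finset.univ.erase i := Finset.mem_erase.mpr ⟨hji, Finset.mem_univ j⟩
    have e2 : ∑ l ∈ (Finset.univ.erase i).erase j, (K i ∩ A l).card + (K i ∩ A j).card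
        = ∑ l ∈ Finset.univ.erase i, (K i ∩ A l).card := Finset.sum_erase_add _ _ hji'
    have e3 : ∑ l ∈ (Finset.univ.erase i).erase j, (K i ∩ A l).card
        ≤ ((Finset.univ.erase i).erase j).card * 1 :=
      Finset.sum_le_card_nsmul _ _ 1 (fun l _ => hle1 i l)
    have e4 : ((Finset.univ.erase i).erase j).card = α * ω - 1 := by
      rw [Finset.card_erase_of_mem hji', Finset.card_erase_of_mem (Finset.mem_univ i),
        Finset.card_univ, hcardι]
      omega
    have hαω : 1 ≤ α * ω := Nat.mul_pos hα1 hω1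
    have hX := e1.trans hSi
    rw [hA_K_disj i, add_zero] at hX
    have hY := e2.trans hX
    rw [hj0, add_zero] at hY
    rw [e4, mul_one, hY] at e3
    omega
  -- linear independence
  let v : ι → ({x // x ∈ s} → ℚ) := fun i x => if ↑x ∈ A i then 1 else 0
  let w : ι → ({x // x ∈ s} → ℚ) := fun j x => if ↑x ∈ K j then 1 else 0
  have hKs' : ∀ j, K j ⊆ s := fun j => (hK1 j).trans Finset.sdiff_subset
  have hpair : ∀ i j : ι, ∑ x : {x // x ∈ s}, v i x * w j x = ((A i ∩ K j).card : ℚ) := by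
    intro i j
    rw [Finset.univ_eq_attach, Finset.sum_attach s (fun y => (if y ∈ A i then (1:ℚ) else 0) * (if y ∈ K j then 1 else 0))]
    have : ∀ y ∈ s, (if y ∈ A i then (1:ℚ) else 0) * (if y ∈ K j then 1 else 0)
        = if y ∈ A i ∩ K j then 1 else 0 := by
      intro y _
      by_cases h1 : y ∈ A i <;> by_cases h2 : y ∈ K j <;>
        simp [h1, h2, Finset.mem_inter]
    rw [Finset.sum_congr rfl this, Finset.sum_ite_mem, Finset.inter_comm s,
      Finset.sum_const]
    have : (A i ∩ K j) ∩ s = A i ∩ K j := by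
      refine Finset.inter_eq_left.mpr ?_
      exact (Finset.inter_subset_left).trans (hAsub i)
    rw [this]
    simp
  have hvals : ∀ i j : ι, ((A i ∩ K j).card : ℚ) = if i = j then 0 else 1 := by
    intro i j
    rw [Finset.inter_comm]
    by_cases h : i = j
    · subst h; rw [if_pos rfl, hA_K_disj i]; simp
    · rw [if_neg h, hone j i h]; simp
  have hli : LinearIndependent ℚ v := by
    rw [Fintype.linearIndependent_iff]
    intro g hg
    have hzero : ∀ x : {x // x ∈ s}, (∑ i : ι, g i * v i x) = 0 := by
      intro x
      have := congrFun hg x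
      rw [Finset.sum_apply] at this
      simpa [smul_eq_mul] using this
    have hpair' : ∀ j : ι, ∑ i : ι, g i * (if i = j then (0:ℚ) else 1) = 0 := by
      intro j
      have h1 : ∑ i : ι, g i * (if i = j then (0:ℚ) else 1)
          = ∑ i : ι, g i * ∑ x : {x // x ∈ s}, v i x * w j x := by
        refine Finset.sum_congr rfl (fun i _ => ?_)
        rw [hpair i j, hvals i j]
      have h2 : ∑ i : ι, g i * ∑ x : {x // x ∈ s}, v i x * w j x
          = ∑ x : {x // x ∈ s}, (∑ i : ι, g i * v i x) * w j x := by
        simp_rw [Finset.mul_sum, Finset.sum_mul, mul_assoc]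
        rw [Finset.sum_comm]
      rw [h1, h2]
      refine Finset.sum_eq_zero (fun x _ => ?_)
      rw [hzero x, zero_mul]
    have hgS : ∀ j : ι, g j = ∑ i : ι, g i := by
      intro j
      have h3 := hpair' j
      have h4 : ∀ i : ι, g i * (if i = j then (0:ℚ) else 1)
          = g i - (if i = j then g i else 0) := by
        intro i; by_cases h : i = j <;> simp [h]
      rw [Finset.sum_congr rfl (fun i _ => h4 i), Finset.sum_sub_distrib,
        Finset.sum_ite_eq' Finset.univ j g, if_pos (Finset.mem_univ j)] at h3
      linarith
    set S := ∑ i : ι, g i with hS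
    have hSsum : S = (Fintype.card ι : ℚ) * S := by
      calc S = ∑ i : ι, g i := hS
        _ = ∑ _i : ι, S := Finset.sum_congr rfl (fun i _ => hgS i)
        _ = (Fintype.card ι : ℚ) * S := by
            rw [Finset.sum_const, Finset.card_univ, nsmul_eq_mul]
    have hS0 : S = 0 := by
      have h1 : ((Fintype.card ι : ℚ) - 1) * S = 0 := by
        rw [sub_mul, one_mul, ← hSsum, sub_self]
      rcases mul_eq_zero.mp h1 with h | h
      · exfalso
        have hαω : 1 ≤ α * ω := Nat.mul_pos hα1 hω1
        have hN2 : (2:ℚ) ≤ (Fintype.card ι : ℚ) := by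
          rw [hcardι]
          exact_mod_cast Nat.succ_le_succ hαω
        linarith
      · exact h
    intro i
    rw [hgS i]
    exact hS0
  have hfin : Fintype.card ι ≤ Module.finrank ℚ ({x // x ∈ s} → ℚ) :=
    hli.fintype_card_le_finrank
  rw [Module.finrank_fintype_fun_eq_card, Fintype.card_coe, hcardι] at hfin
  have hb := hbound s (le_refl s)
  rw [mul_comm, ← hα, ← hω] at hb
  omega

theorem stmt19 [Fintype V] (G : SimpleGraph V) (n : ℕ)
    (hG : IsPerfect G) (hn : IsIndepNum G n) :
    (∃ C : Finset (Finset V), IsCliqueCover G C ∧ C.card = n) ∧ IsPerfect Gᶜ := by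
  classical
  have hnice : ∀ t : Finset V, cn G t = cw G t := fun t => (nice_induce_iff G t).mp (hG t)
  have hboundG : ∀ t : Finset V, t.card ≤ cw G t * cw Gᶜ t := fun t => by
    have h := card_le_cn_mul G t
    rwa [hnice t] at h
  have hGc : ∀ s : Finset V, cn Gᶜ s = cw Gᶜ s := fun s =>
    key Gᶜ s (fun t _ => by rw [compl_compl, mul_comm]; exact hboundG t)
  have hperfc : IsPerfect Gᶜ := fun s => (nice_induce_iff Gᶜ s).mpr (hGc s)
  refine ⟨?_, hperfc⟩
  -- clique cover of size n
  have hset : cwSet Gᶜ Finset.univ = {k | ∃ I : Finset V, IsStableSet G (I : Set V) ∧ I.card = k} := by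
    ext k
    constructor
    · rintro ⟨t, -, ht⟩
      exact ⟨t, (isNClique_compl_iff G t k).mp ht⟩
    · rintro ⟨I, hI⟩
      exact ⟨I, Finset.subset_univ I, (isNClique_compl_iff G I k).mpr hI⟩
  have hgw : IsGreatest (cwSet Gᶜ Finset.univ) n := by rw [hset]; exact hn
  have hcwn : cw Gᶜ Finset.univ = n := (cw_isGreatest Gᶜ Finset.univ).unique hgw
  have hcnn : cn Gᶜ Finset.univ = n := by rw [hGc Finset.univ, hcwn]
  obtain ⟨f, hf, hfc⟩ := (cn_isLeast Gᶜ Finset.univ).1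
  refine ⟨(Finset.univ.image f).image (fun c => Finset.univ.filter (fun v => f v = c)), ⟨?_, ?_⟩, ?_⟩
  · intro K hK
    obtain ⟨c, -, rfl⟩ := Finset.mem_image.mp hK
    intro x hx y hy hne
    simp only [Finset.coe_filter, Set.mem_setOf_eq] at hx hy
    by_contra hadj
    exact hf x (Finset.mem_univ x) y (Finset.mem_univ y) ((SimpleGraph.compl_adj G x y).mpr ⟨hne, hadj⟩)
      (hx.2.trans hy.2.symm)
  · intro v
    exact ⟨Finset.univ.filter (fun u => f u = f v),
      Finset.mem_image_of_mem _ (Finset.mem_image_of_mem f (Finset.mem_univ v)),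
      Finset.mem_filter.mpr ⟨Finset.mem_univ v, rfl⟩⟩
  · rw [Finset.card_image_of_injOn, hfc, hcnn]
    intro c hc c' hc' heq
    obtain ⟨v, -, rfl⟩ := Finset.mem_image.mp hc
    have hv : v ∈ Finset.univ.filter (fun u => f u = f v) :=
      Finset.mem_filter.mpr ⟨Finset.mem_univ v, rfl⟩
    dsimp only at heq
    rw [heq] at hv
    exact (Finset.mem_filter.mp hv).2
end
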